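/- Let p ∈ (0,1] and assume P_x(τ_∂ < ∞) = 1 for every x ∈ χ (equivalently, (K^t 𝟙)(x) → 0 as t → ∞ for every x). Then there exists a unique z ∈ [1,∞) such that the series Σ_{s=0}^{∞} P_μ(τ_∂ > s)·(1 − (1−p)/z)^{−(s+1)} converges and z = p times its sum; i.e., the infinite-horizon fixed point equation z = p·Σ_{s=0}^{∞} P_μ(τ_∂ > s)·(1 − (1−p)/z)^{−(s+1)} has exactly one solution z in [1,∞) (where z is counted as a solution only when the series converges). (Proposition 4.1, case T = ∞.) -/

import Mathlib

open Finset Filter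

/-- Extend a path `f : Fin (n+1) → χ` to a function `ℕ → χ` by freezing its last value. -/
noncomputable def pad {χ : Type*} {n : ℕ} (f : Fin (n + 1) → χ) : ℕ → χ :=
  fun i => f ⟨min i n, Nat.lt_succ_of_le (min_le_right i n)⟩

/-- `pathW K μ t f = μ(f 0) · ∏_{i=0}^{t-1} K(f i, f (i+1))`, the weight
`P_μ(X_0 = f 0, …, X_t = f t, τ_∂ > t)` of a surviving path. -/
noncomputable def pathW {χ : Type*} (K : χ → χ → ℝ) (μ : χ → ℝ) (t : ℕ) (f : ℕ → χ) : ℝ :=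
  μ (f 0) * ∏ i ∈ Finset.range t, K (f i) (f (i + 1))

/-- The survival probability `P_μ(τ_∂ > t) = ∑_{f : {0,…,t} → χ} W_t(f)`. -/
noncomputable def surv {χ : Type*} [Fintype χ] (K : χ → χ → ℝ) (μ : χ → ℝ) (t : ℕ) : ℝ :=
  ∑ f : Fin (t + 1) → χ, pathW K μ t (pad f)

/- ### Auxiliary material -/

set_option linter.unusedSectionVars false

/-- Geometric-block bound for sums of `r^(i/t0)`. -/
lemma sum_pow_div_le {t0 : ℕ} (ht0 : 0 < t0) {r : ℝ} (h0 : 0 ≤ r) (h1 : r < 1) (n : ℕ) :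
    ∑ i ∈ range n, r^(i/t0) ≤ t0 * (1-r)⁻¹ := by
  have hstep : ∀ N : ℕ, ∑ i ∈ range (N*t0), r^(i/t0) = ∑ m ∈ range N, (t0 : ℝ) * r^m := by
    intro N
    induction N with
    | zero => simp
    | succ N ih =>
      have h2 : (N+1)*t0 = N*t0 + t0 := by ring
      rw [h2, Finset.sum_range_add, ih, Finset.sum_range_succ]
      congr 1
      have h3 : ∀ i ∈ range t0, r^((N*t0 + i)/t0) = r^N := by
        intro i hi
        rw [Finset.mem_range] at hi
        congr 1
        rw [Nat.mul_comm, Nat.mul_add_div ht0, Nat.div_eq_of_lt hi]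
        omega
      rw [Finset.sum_congr rfl h3]
      simp [mul_comm]
  have hmono : ∑ i ∈ range n, r^(i/t0) ≤ ∑ i ∈ range ((n/t0 + 1) * t0), r^(i/t0) := by
    refine Finset.sum_le_sum_of_subset_of_nonneg ?_ (fun i _ _ => pow_nonneg h0 _)
    refine Finset.range_subset_range.mpr ?_
    have h5 := Nat.lt_div_mul_add (a := n) ht0
    calc n ≤ n/t0*t0 + t0 := h5.le
      _ = (n/t0 + 1)*t0 := by ring
  refine le_trans hmono ?_
  rw [hstep]
  rw [← Finset.mul_sum]
  refine mul_le_mul_of_nonneg_left ?_ (by positivity)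
  calc ∑ m ∈ range _, r^m ≤ ∑' m : ℕ, r^m :=
        Summable.sum_le_tsum _ (fun i _ => pow_nonneg h0 i) (summable_geometric_of_lt_one h0 h1)
    _ = (1-r)⁻¹ := tsum_geometric_of_lt_one h0 h1

noncomputable def psiF (a : ℕ → ℝ) (u : ℝ) : ℝ := ∑' s, a s * u^(s+1)
noncomputable def rF (p z : ℝ) : ℝ := (1 - (1-p)/z)⁻¹

section An
variable {a : ℕ → ℝ} (hnn : ∀ s, 0 ≤ a s)
include hnn

lemma comp_summable {u w : ℝ} (hu : 0 ≤ u) (huw : u ≤ w)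
    (h : Summable (fun s => a s * w^(s+1))) : Summable (fun s => a s * u^(s+1)) :=
  Summable.of_nonneg_of_le (fun s => mul_nonneg (hnn s) (pow_nonneg hu _))
    (fun s => mul_le_mul_of_nonneg_left (pow_le_pow_left₀ hu huw _) (hnn s)) h

lemma psiF_nonneg {u : ℝ} (hu : 0 ≤ u) : 0 ≤ psiF a u :=
  tsum_nonneg fun s => mul_nonneg (hnn s) (pow_nonneg hu _)

lemma psiF_mono {u w : ℝ} (hu : 0 ≤ u) (huw : u ≤ w)
    (h : Summable (fun s => a s * w^(s+1))) : psiF a u ≤ psiF a w :=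
  Summable.tsum_le_tsum (fun s => mul_le_mul_of_nonneg_left (pow_le_pow_left₀ hu huw _) (hnn s))
    (comp_summable hnn hu huw h) h

lemma psiF_ge (h0 : a 0 = 1) {u : ℝ} (hu : 0 ≤ u)
    (h : Summable (fun s => a s * u^(s+1))) : u ≤ psiF a u := by
  have := Summable.le_tsum h 0 (fun j _ => mul_nonneg (hnn j) (pow_nonneg hu _))
  simpa [psiF, h0] using this

lemma psiF_cont {c : ℝ} (h : Summable (fun s => a s * c^(s+1))) :
    ContinuousOn (psiF a) (Set.Icc 0 c) := by
  apply continuousOn_tsum (u := fun s => a s * c^(s+1))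
    (fun s => (continuous_const.mul (continuous_pow (s+1))).continuousOn) h
  intro n x hx
  simp only [Real.norm_eq_abs, Pi.mul_apply]; rw [abs_mul, abs_of_nonneg (hnn n), abs_pow]
  refine mul_le_mul_of_nonneg_left (pow_le_pow_left₀ (abs_nonneg x) ?_ _) (hnn n)
  rw [abs_of_nonneg hx.1]; exact hx.2

end An

section Rf
variable {p : ℝ} (hp : 0 < p) (hp1 : p ≤ 1)
include hp hp1

lemma rF_den {z : ℝ} (hz : 1 ≤ z) : p ≤ 1 - (1-p)/z := by
  have h1 : (1-p)/z ≤ 1-p := div_le_self (by linarith) hz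
  linarith

lemma rF_ge_one {z : ℝ} (hz : 1 ≤ z) : 1 ≤ rF p z := by
  have h0 : 0 ≤ (1-p)/z := div_nonneg (by linarith) (by linarith)
  have hpos : 0 < 1 - (1-p)/z := lt_of_lt_of_le hp (rF_den hp hp1 hz)
  have := inv_anti₀ hpos (by linarith : 1 - (1-p)/z ≤ 1)
  simpa [rF] using this

lemma rF_le_pinv {z : ℝ} (hz : 1 ≤ z) : rF p z ≤ p⁻¹ :=
  inv_anti₀ hp (rF_den hp hp1 hz)

lemma rF_anti {z w : ℝ} (hz : 1 ≤ z) (hzw : z ≤ w) : rF p w ≤ rF p z := by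
  have hzpos : (0:ℝ) < z := by linarith
  have hwpos : (0:ℝ) < w := by linarith
  have h1 : (1-p)/w ≤ (1-p)/z := by
    rw [div_le_div_iff₀ hwpos hzpos]
    nlinarith
  exact inv_anti₀ (lt_of_lt_of_le hp (rF_den hp hp1 hz)) (by linarith)

lemma rF_cont : ContinuousOn (rF p) (Set.Ici (1:ℝ)) := by
  apply ContinuousOn.inv₀
  · exact continuousOn_const.sub (continuousOn_const.div continuousOn_id
      (fun z hz => ne_of_gt (lt_of_lt_of_le one_pos hz)))
  · intro z hz
    exact ne_of_gt (lt_of_lt_of_le hp (rF_den hp hp1 hz))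

lemma rF_one : rF p 1 = p⁻¹ := by simp [rF]

lemma rF_form (hp' : p < 1) {u : ℝ} (hu : 1 < u) : rF p ((1-p)*u/(u-1)) = u := by
  have h1 : u - 1 ≠ 0 := by linarith
  have h2 : (1:ℝ) - p ≠ 0 := by linarith
  have h3 : u ≠ 0 := by linarith
  have hz : (1-p)*u/(u-1) ≠ 0 := by positivity
  rw [rF]
  rw [show (1:ℝ) - (1-p)/((1-p)*u/(u-1)) = u⁻¹ by field_simp; ring]
  exact inv_inv u

end Rf
theorem abstract_main (a : ℕ → ℝ) (h0 : a 0 = 1) (hnn : ∀ s, 0 ≤ a s)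
    (hsum1 : Summable a)
    (hopen : ∀ u, 1 ≤ u → Summable (fun s => a s * u^(s+1)) →
       ∃ u', u < u' ∧ Summable (fun s => a s * u'^(s+1)))
    (p : ℝ) (hp : 0 < p) (hp1 : p ≤ 1) :
    ∃! z : ℝ, 1 ≤ z ∧ Summable (fun s => a s * (rF p z)^(s+1)) ∧
      z = p * psiF a (rF p z) := by
  have huniq : ∀ z w, (1 ≤ z ∧ Summable (fun s => a s * (rF p z)^(s+1)) ∧ z = p * psiF a (rF p z)) →
      (1 ≤ w ∧ Summable (fun s => a s * (rF p w)^(s+1)) ∧ w = p * psiF a (rF p w)) →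
      z ≤ w → w ≤ z := by
    rintro z w ⟨hz1, hzs, hze⟩ ⟨hw1, hws, hwe⟩ hzw
    have h1 : rF p w ≤ rF p z := rF_anti hp hp1 hz1 hzw
    have h0w : (0:ℝ) ≤ rF p w := le_trans zero_le_one (rF_ge_one hp hp1 hw1)
    have h2 : psiF a (rF p w) ≤ psiF a (rF p z) :=
      Summable.tsum_le_tsum (fun s => mul_le_mul_of_nonneg_left (pow_le_pow_left₀ h0w h1 _) (hnn s)) hws hzs
    calc w = p * psiF a (rF p w) := hwe
      _ ≤ p * psiF a (rF p z) := mul_le_mul_of_nonneg_left h2 hp.le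
      _ = z := hze.symm
  have hpinv1 : (1:ℝ) ≤ p⁻¹ := by
    have := inv_anti₀ hp hp1
    simpa using this
  suffices hex : ∃ z : ℝ, 1 ≤ z ∧ Summable (fun s => a s * (rF p z)^(s+1)) ∧
      z = p * psiF a (rF p z) by
    obtain ⟨z0, hz0⟩ := hex
    refine ⟨z0, hz0, fun y hy => ?_⟩
    rcases le_total y z0 with h | h
    · exact le_antisymm h (huniq y z0 hy hz0 h)
    · exact le_antisymm (huniq z0 y hz0 hy h) h
  by_cases hcase : Summable (fun s => a s * (p⁻¹)^(s+1))
  · -- Case 1 : summable at p⁻¹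
    obtain ⟨c, hc1, hcs⟩ := hopen p⁻¹ hpinv1 hcase
    have hψp : p⁻¹ ≤ psiF a p⁻¹ := psiF_ge hnn h0 (by positivity) hcase
    have hpψ : 1 ≤ p * psiF a p⁻¹ := by
      have := mul_le_mul_of_nonneg_left hψp hp.le
      rwa [mul_inv_cancel₀ hp.ne'] at this
    obtain ⟨Z, hZdef⟩ : ∃ Z : ℝ, Z = 1 + p * psiF a p⁻¹ := ⟨_, rfl⟩
    have hZ1 : (1:ℝ) ≤ Z := by linarith
    obtain ⟨F, hFdef⟩ : ∃ F : ℝ → ℝ, F = fun z => z - p * psiF a (rF p z) := ⟨_, rfl⟩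
    have hFcont : ContinuousOn F (Set.Icc 1 Z) := by
      rw [hFdef]
      refine ContinuousOn.sub continuousOn_id (continuousOn_const.mul ?_)
      have hsub : Set.Icc (1:ℝ) Z ⊆ Set.Ici 1 := fun z hz => hz.1
      have hmaps : Set.MapsTo (rF p) (Set.Icc (1:ℝ) Z) (Set.Icc (0:ℝ) c) := by
        intro z hz
        exact ⟨le_trans zero_le_one (rF_ge_one hp hp1 hz.1),
          le_trans (rF_le_pinv hp hp1 hz.1) hc1.le⟩
      have hcomp := ContinuousOn.comp (psiF_cont hnn hcs) ((rF_cont hp hp1).mono hsub) hmaps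
      exact hcomp
    have hF1 : F 1 ≤ 0 := by
      simp only [hFdef, rF_one hp hp1]
      linarith
    have hFZ : 0 ≤ F Z := by
      have h1 : rF p Z ≤ p⁻¹ := rF_le_pinv hp hp1 hZ1
      have h0Z : (0:ℝ) ≤ rF p Z := le_trans zero_le_one (rF_ge_one hp hp1 hZ1)
      have h2 : psiF a (rF p Z) ≤ psiF a p⁻¹ := psiF_mono hnn h0Z h1 hcase
      have h3 := mul_le_mul_of_nonneg_left h2 hp.le
      simp only [hFdef]
      linarith
    obtain ⟨z0, hz0mem, hz0⟩ := intermediate_value_Icc hZ1 hFcont ⟨hF1, hFZ⟩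
    refine ⟨z0, hz0mem.1, ?_, ?_⟩
    · exact comp_summable hnn (le_trans zero_le_one (rF_ge_one hp hp1 hz0mem.1))
        (rF_le_pinv hp hp1 hz0mem.1) hcase
    · simp only [hFdef] at hz0
      linarith
  · -- Case 2 : not summable at p⁻¹
    have hp' : p < 1 := by
      rcases lt_or_eq_of_le hp1 with h | h
      · exact h
      · exfalso; apply hcase; rw [h]; simpa using hsum1
    obtain ⟨u1, hu11, hu1s⟩ := hopen 1 le_rfl (by simpa using hsum1)
    have hu1p : u1 ≤ p⁻¹ := by
      by_contra h
      push_neg at h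
      exact hcase (comp_summable hnn (by positivity) h.le hu1s)
    have hAbdd : BddAbove {u : ℝ | 1 ≤ u ∧ u ≤ p⁻¹ ∧ Summable (fun s => a s * u^(s+1))} :=
      ⟨p⁻¹, fun u hu => hu.2.1⟩
    have hAne : u1 ∈ {u : ℝ | 1 ≤ u ∧ u ≤ p⁻¹ ∧ Summable (fun s => a s * u^(s+1))} :=
      ⟨hu11.le, hu1p, hu1s⟩
    obtain ⟨us, husdef⟩ : ∃ x : ℝ,
        x = sSup {u : ℝ | 1 ≤ u ∧ u ≤ p⁻¹ ∧ Summable (fun s => a s * u^(s+1))} := ⟨_, rfl⟩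
    have hus1 : u1 ≤ us := by rw [husdef]; exact le_csSup hAbdd hAne
    have husp : us ≤ p⁻¹ := by rw [husdef]; exact csSup_le ⟨u1, hAne⟩ (fun u hu => hu.2.1)
    have husdiv : ¬ Summable (fun s => a s * us^(s+1)) := by
      intro hsum
      obtain ⟨u', hu'gt, hu's⟩ := hopen us (le_trans hu11.le hus1) hsum
      rcases le_total u' p⁻¹ with h | h
      · have hmem : u' ∈ {u : ℝ | 1 ≤ u ∧ u ≤ p⁻¹ ∧ Summable (fun s => a s * u^(s+1))} :=
          ⟨by linarith, h, hu's⟩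
        have : u' ≤ us := by rw [husdef]; exact le_csSup hAbdd hmem
        linarith
      · exact hcase (comp_summable hnn (by positivity) h hu's)
    have hu1us : u1 < us := lt_of_le_of_ne hus1 (fun h => husdiv (h ▸ hu1s))
    have hbelow : ∀ u, 1 ≤ u → u < us → Summable (fun s => a s * u^(s+1)) := by
      intro u hu hult
      rw [husdef] at hult
      obtain ⟨w, hwA, hw⟩ := exists_lt_of_lt_csSup ⟨u1, hAne⟩ hult
      exact comp_summable hnn (by linarith) hw.le hwA.2.2
    obtain ⟨Z1, hZ1def⟩ : ∃ x : ℝ, x = (1-p)*u1/(u1-1) := ⟨_, rfl⟩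
    have hdiverge : Tendsto (fun n => ∑ s ∈ range n, a s * us^(s+1)) atTop atTop := by
      by_contra h
      exact husdiv ((summable_iff_not_tendsto_nat_atTop_of_nonneg
        (fun s => mul_nonneg (hnn s) (pow_nonneg (by linarith) _))).mpr h)
    obtain ⟨N, hN⟩ := (hdiverge.eventually_gt_atTop (Z1/p)).exists
    have hgcont : ContinuousAt (fun u : ℝ => ∑ s ∈ range N, a s * u^(s+1)) us :=
      (continuous_finset_sum _ (fun s _ => continuous_const.mul (continuous_pow (s+1)))).continuousAt
    have hev : ∀ᶠ u in nhds us, Z1/p < ∑ s ∈ range N, a s * u^(s+1) :=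
      hgcont.eventually (eventually_gt_nhds hN)
    obtain ⟨ε, hε, hball⟩ := Metric.eventually_nhds_iff.mp hev
    obtain ⟨ud, huddef⟩ : ∃ x : ℝ, x = max u1 (us - ε/2) := ⟨_, rfl⟩
    have hudlt : ud < us := by rw [huddef]; exact max_lt hu1us (by linarith)
    have hudge : u1 ≤ ud := by rw [huddef]; exact le_max_left _ _
    have hud1 : 1 < ud := lt_of_lt_of_le hu11 hudge
    have hudp : ud ≤ p⁻¹ := le_trans hudlt.le husp
    have hudlb : us - ε/2 ≤ ud := by rw [huddef]; exact le_max_right _ _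
    have hgud : Z1/p < ∑ s ∈ range N, a s * ud^(s+1) := by
      apply hball
      rw [Real.dist_eq, abs_of_nonpos (by linarith : ud - us ≤ 0)]
      linarith
    have huds : Summable (fun s => a s * ud^(s+1)) := hbelow ud hud1.le hudlt
    have hψud : Z1/p < psiF a ud := by
      refine lt_of_lt_of_le hgud ?_
      unfold psiF
      exact Summable.sum_le_tsum (range N) (fun s _ => mul_nonneg (hnn s) (pow_nonneg (by linarith) _)) huds
    have hZ1ψ : Z1 < p * psiF a ud := by
      rw [div_lt_iff₀ hp] at hψud
      linarith
    obtain ⟨zd, hzddef⟩ : ∃ x : ℝ, x = (1-p)*ud/(ud-1) := ⟨_, rfl⟩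
    have hRzd : rF p zd = ud := by rw [hzddef]; exact rF_form hp hp1 hp' hud1
    have hzd1 : (1:ℝ) ≤ zd := by
      rw [hzddef, le_div_iff₀ (by linarith : (0:ℝ) < ud - 1)]
      have hpud : p * ud ≤ 1 := by
        have := mul_le_mul_of_nonneg_left hudp hp.le
        rwa [mul_inv_cancel₀ hp.ne'] at this
      nlinarith
    have hzdZ1 : zd ≤ Z1 := by
      rw [hzddef, hZ1def,
        div_le_div_iff₀ (by linarith : (0:ℝ) < ud - 1) (by linarith : (0:ℝ) < u1 - 1)]
      nlinarith
    have hψu1 : 0 ≤ psiF a u1 := psiF_nonneg hnn (by linarith)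
    obtain ⟨Z, hZdef⟩ : ∃ x : ℝ, x = Z1 + 1 + p * psiF a u1 := ⟨_, rfl⟩
    have hZ1ge1 : (1:ℝ) ≤ Z1 := le_trans hzd1 hzdZ1
    have hpψ0 : 0 ≤ p * psiF a u1 := mul_nonneg hp.le hψu1
    have hZge : (1:ℝ) ≤ Z := by linarith
    have hzdZ : zd ≤ Z := by linarith
    have hRZ1 : rF p Z1 = u1 := by rw [hZ1def]; exact rF_form hp hp1 hp' hu11
    have hRZu1 : rF p Z ≤ u1 := by
      rw [← hRZ1]
      exact rF_anti hp hp1 hZ1ge1 (by linarith)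
    obtain ⟨c, hcdef⟩ : ∃ x : ℝ, x = (ud + us)/2 := ⟨_, rfl⟩
    have hudc : ud ≤ c := by rw [hcdef]; linarith
    have hcus : c < us := by rw [hcdef]; linarith
    have hc1 : (1:ℝ) ≤ c := by linarith
    have hcs : Summable (fun s => a s * c^(s+1)) := hbelow c hc1 hcus
    obtain ⟨F, hFdef⟩ : ∃ F : ℝ → ℝ, F = fun z => z - p * psiF a (rF p z) := ⟨_, rfl⟩
    have hFcont : ContinuousOn F (Set.Icc zd Z) := by
      rw [hFdef]
      refine ContinuousOn.sub continuousOn_id (continuousOn_const.mul ?_)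
      have hsub : Set.Icc zd Z ⊆ Set.Ici 1 := fun z hz => le_trans hzd1 hz.1
      have hmaps : Set.MapsTo (rF p) (Set.Icc zd Z) (Set.Icc (0:ℝ) c) := by
        intro z hz
        have hz1 : (1:ℝ) ≤ z := le_trans hzd1 hz.1
        refine ⟨le_trans zero_le_one (rF_ge_one hp hp1 hz1), ?_⟩
        calc rF p z ≤ rF p zd := rF_anti hp hp1 hzd1 hz.1
          _ = ud := hRzd
          _ ≤ c := hudc
      have hcomp := ContinuousOn.comp (psiF_cont hnn hcs) ((rF_cont hp hp1).mono hsub) hmaps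
      exact hcomp
    have hFzd : F zd ≤ 0 := by
      simp only [hFdef, hRzd]
      linarith
    have hFZ : 0 ≤ F Z := by
      have h0Z : (0:ℝ) ≤ rF p Z := le_trans zero_le_one (rF_ge_one hp hp1 hZge)
      have h2 : psiF a (rF p Z) ≤ psiF a u1 := psiF_mono hnn h0Z hRZu1 hu1s
      have h3 := mul_le_mul_of_nonneg_left h2 hp.le
      simp only [hFdef]
      linarith
    obtain ⟨z0, hz0mem, hz0⟩ := intermediate_value_Icc hzdZ hFcont ⟨hFzd, hFZ⟩
    have hz01 : (1:ℝ) ≤ z0 := le_trans hzd1 hz0mem.1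
    refine ⟨z0, hz01, ?_, ?_⟩
    · refine comp_summable hnn (le_trans zero_le_one (rF_ge_one hp hp1 hz01)) ?_ huds
      calc rF p z0 ≤ rF p zd := rF_anti hp hp1 hzd1 hz0mem.1
        _ = ud := hRzd
    · simp only [hFdef] at hz0
      linarith

section Comb
variable {χ : Type*} [Fintype χ] [DecidableEq χ]

noncomputable def qk (K : χ → χ → ℝ) : ℕ → χ → ℝ
  | 0 => fun _ => 1
  | (t+1) => fun x => ∑ y, K x y * qk K t y

lemma pad_zero {n : ℕ} (f : Fin (n+1) → χ) : pad f 0 = f 0 := by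
  unfold pad; congr 1

lemma pad_cons {n : ℕ} (x : χ) (g : Fin (n+1) → χ) (i : ℕ) :
    pad (Fin.cons x g : Fin (n+2) → χ) (i+1) = pad g i := by
  unfold pad
  have h1 : (⟨min (i+1) (n+1), Nat.lt_succ_of_le (min_le_right _ _)⟩ : Fin (n+2))
      = Fin.succ ⟨min i n, Nat.lt_succ_of_le (min_le_right i n)⟩ := by
    ext; simp [Nat.succ_min_succ]
  rw [h1, Fin.cons_succ]

lemma pad_cons_zero {n : ℕ} (x : χ) (g : Fin (n+1) → χ) :
    pad (Fin.cons x g : Fin (n+2) → χ) 0 = x := by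
  rw [pad_zero]; exact Fin.cons_zero _ _

lemma surv_zero (K : χ → χ → ℝ) (ν : χ → ℝ) : surv K ν 0 = ∑ x, ν x := by
  unfold surv pathW
  simp only [Finset.range_zero, Finset.prod_empty, mul_one]
  rw [← (Equiv.funUnique (Fin 1) χ).symm.sum_comp]
  refine Finset.sum_congr rfl fun x _ => ?_
  rw [pad_zero]; rfl

lemma surv_succ (K : χ → χ → ℝ) (ν : χ → ℝ) (t : ℕ) :
    surv K ν (t+1) = ∑ x, ν x * surv K (fun y => K x y) t := by
  unfold surv pathW
  rw [← Equiv.sum_comp (Fin.consEquiv (fun _ : Fin (t+2) => χ))]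
  rw [Fintype.sum_prod_type]
  refine Finset.sum_congr rfl fun x _ => ?_
  rw [Finset.mul_sum]
  refine Finset.sum_congr rfl fun g _ => ?_
  have hc : ((Fin.consEquiv (fun _ : Fin (t+2) => χ)) (x, g)) = Fin.cons x g := rfl
  rw [hc, pad_cons_zero, Finset.prod_range_succ']
  simp only [pad_cons, pad_cons_zero]
  ring

lemma surv_eq_sum (K : χ → χ → ℝ) (ν : χ → ℝ) (t : ℕ) :
    surv K ν t = ∑ x, ν x * surv K (fun y => if y = x then 1 else 0) t := by
  unfold surv pathW
  simp only [Finset.mul_sum]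
  rw [Finset.sum_comm]
  refine Finset.sum_congr rfl fun f _ => ?_
  have : ∀ x : χ, ν x * ((if pad f 0 = x then (1:ℝ) else 0) * ∏ i ∈ range t, K (pad f i) (pad f (i+1)))
      = if pad f 0 = x then ν x * ∏ i ∈ range t, K (pad f i) (pad f (i+1)) else 0 := by
    intro x; by_cases h : pad f 0 = x <;> simp [h]
  simp only [this]
  rw [Finset.sum_ite_eq]
  simp

lemma surv_delta (K : χ → χ → ℝ) (t : ℕ) (x : χ) :
    surv K (fun y => if y = x then 1 else 0) t = qk K t x := by
  induction t generalizing x with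
  | zero => rw [surv_zero]; simp [qk]
  | succ t ih =>
    rw [surv_succ]
    have : ∀ z : χ, (if z = x then (1:ℝ) else 0) * surv K (fun y => K z y) t
        = if z = x then surv K (fun y => K x y) t else 0 := by
      intro z; by_cases h : z = x <;> simp [h]
    simp only [this, Finset.sum_ite_eq', Finset.mem_univ, if_true]
    rw [surv_eq_sum]
    simp only [qk]
    exact Finset.sum_congr rfl fun y _ => by rw [ih]

lemma surv_eq (K : χ → χ → ℝ) (ν : χ → ℝ) (t : ℕ) :
    surv K ν t = ∑ x, ν x * qk K t x := by
  rw [surv_eq_sum]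
  exact Finset.sum_congr rfl fun x _ => by rw [surv_delta]

variable {K : χ → χ → ℝ} (hK0 : ∀ x y, 0 ≤ K x y) (hK1 : ∀ x, ∑ y, K x y ≤ 1)
include hK0 hK1

lemma qk_nonneg (t : ℕ) (x : χ) : 0 ≤ qk K t x := by
  induction t generalizing x with
  | zero => simp [qk]
  | succ t ih => exact Finset.sum_nonneg fun y _ => mul_nonneg (hK0 x y) (ih y)

lemma qk_le_one (t : ℕ) (x : χ) : qk K t x ≤ 1 := by
  induction t generalizing x with
  | zero => simp [qk]
  | succ t ih =>
    calc qk K (t+1) x ≤ ∑ y, K x y := by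
          refine Finset.sum_le_sum fun y _ => ?_
          calc K x y * qk K t y ≤ K x y * 1 := by
                exact mul_le_mul_of_nonneg_left (ih y) (hK0 x y)
            _ = K x y := mul_one _
      _ ≤ 1 := hK1 x

lemma qk_succ_le (t : ℕ) (x : χ) : qk K (t+1) x ≤ qk K t x := by
  induction t generalizing x with
  | zero =>
    show ∑ y, K x y * qk K 0 y ≤ 1
    simpa [qk] using hK1 x
  | succ t ih =>
    show ∑ y, K x y * qk K (t+1) y ≤ ∑ y, K x y * qk K t y
    exact Finset.sum_le_sum fun y _ => mul_le_mul_of_nonneg_left (ih y) (hK0 x y)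

lemma qk_anti {s t : ℕ} (hst : s ≤ t) (x : χ) : qk K t x ≤ qk K s x := by
  induction t with
  | zero => simp_all
  | succ t ih =>
    rcases Nat.lt_or_ge s (t+1) with h | h
    · exact le_trans (qk_succ_le hK0 hK1 t x) (ih (Nat.lt_succ_iff.mp h))
    · have : s = t+1 := le_antisymm hst h
      subst this; rfl

lemma qk_submult {c : ℝ} (hc : 0 ≤ c) {t : ℕ} (h : ∀ y, qk K t y ≤ c) :
    ∀ s x, qk K (s + t) x ≤ c * qk K s x := by
  intro s
  induction s with
  | zero => intro x; simpa [qk] using h x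
  | succ s ih =>
    intro x
    have : s + 1 + t = (s + t) + 1 := by omega
    rw [this]
    show ∑ y, K x y * qk K (s+t) y ≤ c * qk K (s+1) x
    have : c * qk K (s+1) x = ∑ y, c * (K x y * qk K s y) := by
      simp [qk, Finset.mul_sum]
    rw [this]
    refine Finset.sum_le_sum fun y _ => ?_
    calc K x y * qk K (s+t) y ≤ K x y * (c * qk K s y) :=
          mul_le_mul_of_nonneg_left (ih y) (hK0 x y)
      _ = c * (K x y * qk K s y) := by ring

lemma qk_pow {c : ℝ} (hc : 0 ≤ c) {t0 : ℕ} (h : ∀ y, qk K t0 y ≤ c) :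
    ∀ n x, qk K (n * t0) x ≤ c ^ n := by
  intro n
  induction n with
  | zero => intro x; simp [qk]
  | succ n ih =>
    intro x
    have : (n+1) * t0 = n * t0 + t0 := by ring
    rw [this]
    calc qk K (n * t0 + t0) x ≤ c * qk K (n * t0) x := qk_submult hK0 hK1 hc h _ x
      _ ≤ c * c ^ n := mul_le_mul_of_nonneg_left (ih x) hc
      _ = c ^ (n+1) := by ring

variable {μ : χ → ℝ} (hμ0 : ∀ x, 0 ≤ μ x)
include hμ0

lemma right_open (u : ℝ) (hu : 1 ≤ u)
    (hsum : Summable (fun s => (∑ x, μ x * qk K s x) * u^(s+1))) :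
    ∃ u', u < u' ∧ Summable (fun s => (∑ x, μ x * qk K s x) * u'^(s+1)) := by
  have hu0 : (0:ℝ) < u := lt_of_lt_of_le one_pos hu
  have hqnn : ∀ s (x : χ), 0 ≤ qk K s x := qk_nonneg hK0 hK1
  have hann : ∀ s, 0 ≤ ∑ x, μ x * qk K s x :=
    fun s => Finset.sum_nonneg fun x _ => mul_nonneg (hμ0 x) (hqnn s x)
  have hsum' : Summable (fun s => (∑ x, μ x * qk K s x) * u^s) := by
    refine (hsum.mul_right u⁻¹).congr fun s => ?_
    rw [pow_succ]
    field_simp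
  set Sx : χ → Prop := fun x => Summable (fun s => qk K s x * u^s) with hSxdef
  set v : χ → ℝ := fun x => ∑' s, qk K s x * u^s with hvdef
  have hv0 : ∀ x, 0 ≤ v x :=
    fun x => tsum_nonneg fun s => mul_nonneg (hqnn s x) (pow_nonneg hu0.le s)
  have hv1 : ∀ x, Sx x → 1 ≤ v x := by
    intro x hx
    have := Summable.le_tsum hx 0 (fun j _ => mul_nonneg (hqnn j x) (pow_nonneg hu0.le j))
    simpa [qk] using this
  have hsingle : ∀ s (x y : χ), K x y * qk K s y ≤ qk K (s+1) x := by
    intro s x y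
    exact Finset.single_le_sum
      (f := fun z => K x z * qk K s z)
      (fun z _ => mul_nonneg (hK0 x z) (hqnn s z)) (Finset.mem_univ y)
  have hclosed : ∀ x y, Sx x → K x y ≠ 0 → Sx y := by
    intro x y hx hxy
    have hKpos : 0 < K x y := lt_of_le_of_ne (hK0 x y) (Ne.symm hxy)
    have hshift : Summable (fun s => qk K (s+1) x * u^(s+1)) := by
      have := (summable_nat_add_iff 1).mpr hx
      exact this
    refine Summable.of_nonneg_of_le
      (fun s => mul_nonneg (hqnn s y) (pow_nonneg hu0.le s))
      (fun s => ?_) (hshift.mul_left (K x y * u)⁻¹)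
    have h1 : (K x y * u) * (qk K s y * u^s) ≤ qk K (s+1) x * u^(s+1) := by
      rw [pow_succ]
      calc K x y * u * (qk K s y * u^s) = (K x y * qk K s y) * (u^s * u) := by ring
        _ ≤ qk K (s+1) x * (u^s * u) := by
            exact mul_le_mul_of_nonneg_right (hsingle s x y)
              (mul_nonneg (pow_nonneg hu0.le s) hu0.le)
    have hKu : 0 < K x y * u := mul_pos hKpos hu0
    rw [← le_div_iff₀' hKu] at h1
    calc qk K s y * u^s ≤ (qk K (s+1) x * u^(s+1)) / (K x y * u) := h1
      _ = (K x y * u)⁻¹ * (qk K (s+1) x * u^(s+1)) := by ring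
  have hsupp : ∀ x, μ x ≠ 0 → Sx x := by
    intro x hx
    have hμpos : 0 < μ x := lt_of_le_of_ne (hμ0 x) (Ne.symm hx)
    refine Summable.of_nonneg_of_le
      (fun s => mul_nonneg (hqnn s x) (pow_nonneg hu0.le s))
      (fun s => ?_) (hsum'.mul_left (μ x)⁻¹)
    have h1 : μ x * qk K s x ≤ ∑ y, μ y * qk K s y :=
      Finset.single_le_sum (f := fun y => μ y * qk K s y)
        (fun y _ => mul_nonneg (hμ0 y) (hqnn s y)) (Finset.mem_univ x)
    have h2 : μ x * (qk K s x * u^s) ≤ (∑ y, μ y * qk K s y) * u^s := by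
      calc μ x * (qk K s x * u^s) = (μ x * qk K s x) * u^s := by ring
        _ ≤ _ := mul_le_mul_of_nonneg_right h1 (pow_nonneg hu0.le s)
    calc qk K s x * u^s = (μ x)⁻¹ * (μ x * (qk K s x * u^s)) := by field_simp
      _ ≤ (μ x)⁻¹ * ((∑ y, μ y * qk K s y) * u^s) :=
          mul_le_mul_of_nonneg_left h2 (inv_nonneg.mpr (hμ0 x))
  have hres : ∀ x, Sx x → v x = 1 + u * ∑ y, K x y * v y := by
    intro x hx
    have h1 : v x = 1 + ∑' s, qk K (s+1) x * u^(s+1) := by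
      have := Summable.tsum_eq_zero_add hx
      simpa [qk] using this
    have hsy : ∀ y ∈ Finset.univ (α := χ), Summable (fun s => (K x y * qk K s y) * u^(s+1)) := by
      intro y _
      by_cases hxy : K x y = 0
      · simp only [hxy, zero_mul]
        exact summable_zero
      · refine ((hclosed x y hx hxy).mul_left (K x y * u)).congr fun s => ?_
        rw [pow_succ]; ring
    have h2 : ∑' s, qk K (s+1) x * u^(s+1) = ∑ y, ∑' s, (K x y * qk K s y) * u^(s+1) := by
      rw [← Summable.tsum_finsetSum hsy]
      refine tsum_congr fun s => ?_
      show qk K (s+1) x * u^(s+1) = _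
      rw [show qk K (s+1) x = ∑ y, K x y * qk K s y from rfl, Finset.sum_mul]
    have h3 : ∀ y, ∑' s, (K x y * qk K s y) * u^(s+1) = (K x y * u) * v y := by
      intro y
      by_cases hxy : K x y = 0
      · simp [hxy]
      · rw [hvdef]
        rw [← tsum_mul_left]
        refine tsum_congr fun s => ?_
        rw [pow_succ]; ring
    rw [h1, h2]
    simp only [h3]
    rw [Finset.mul_sum]
    congr 1
    exact Finset.sum_congr rfl fun y _ => by ring
  set M : ℝ := (∑ x, v x) + 1 with hMdef
  have hsumv : (0:ℝ) ≤ ∑ x, v x := Finset.sum_nonneg fun x _ => hv0 x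
  have hM1 : (1:ℝ) ≤ M := by rw [hMdef]; linarith
  have hM0 : (0:ℝ) < M := by linarith
  have hvM : ∀ x, v x ≤ M - 1 := by
    intro x
    have := Finset.single_le_sum (f := fun x => v x) (fun y _ => hv0 y) (Finset.mem_univ x)
    rw [hMdef]; linarith
  set δ : ℝ := (M - 1)/M with hδdef
  have hδ0 : 0 ≤ δ := div_nonneg (by linarith) hM0.le
  have hδ1 : δ < 1 := by rw [hδdef, div_lt_one hM0]; linarith
  have key : ∀ s (x : χ), Sx x → qk K s x * u^s ≤ δ^s * v x := by
    intro s
    induction s with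
    | zero =>
      intro x hx
      simpa [qk] using hv1 x hx
    | succ s ih =>
      intro x hx
      have step : qk K (s+1) x * u^(s+1) = u * ∑ y, K x y * (qk K s y * u^s) := by
        rw [show qk K (s+1) x = ∑ y, K x y * qk K s y from rfl, Finset.sum_mul, Finset.mul_sum]
        refine Finset.sum_congr rfl fun y _ => ?_
        rw [pow_succ]; ring
      have hterm : ∀ y ∈ Finset.univ (α := χ), K x y * (qk K s y * u^s) ≤ K x y * (δ^s * v y) := by
        intro y _
        by_cases hxy : K x y = 0
        · simp [hxy]
        · exact mul_le_mul_of_nonneg_left (ih y (hclosed x y hx hxy)) (hK0 x y)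
      have h4 : ∑ y, K x y * (δ^s * v y) = δ^s * ∑ y, K x y * v y := by
        rw [Finset.mul_sum]
        exact Finset.sum_congr rfl fun y _ => by ring
      have h5 : u * ∑ y, K x y * v y = v x - 1 := by
        have := hres x hx
        linarith
      have h6 : v x - 1 ≤ δ * v x := by
        have h7 : v x * (1 - δ) ≤ 1 := by
          have h8 : (1:ℝ) - δ = 1/M := by rw [hδdef]; field_simp; ring
          rw [h8]
          rw [mul_one_div, div_le_one hM0]
          linarith [hvM x]
        nlinarith
      calc qk K (s+1) x * u^(s+1) = u * ∑ y, K x y * (qk K s y * u^s) := step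
        _ ≤ u * ∑ y, K x y * (δ^s * v y) :=
            mul_le_mul_of_nonneg_left (Finset.sum_le_sum hterm) hu0.le
        _ = δ^s * (u * ∑ y, K x y * v y) := by rw [h4]; ring
        _ = δ^s * (v x - 1) := by rw [h5]
        _ ≤ δ^s * (δ * v x) := mul_le_mul_of_nonneg_left h6 (pow_nonneg hδ0 s)
        _ = δ^(s+1) * v x := by rw [pow_succ]; ring
  set C : ℝ := ∑ x, μ x * v x with hCdef
  have hC0 : 0 ≤ C := Finset.sum_nonneg fun x _ => mul_nonneg (hμ0 x) (hv0 x)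
  have hbound : ∀ s, (∑ x, μ x * qk K s x) * u^s ≤ C * δ^s := by
    intro s
    have h1 : ∀ x ∈ Finset.univ (α := χ), μ x * qk K s x * u^s ≤ μ x * (δ^s * v x) := by
      intro x _
      by_cases hx : μ x = 0
      · simp [hx]
      · calc μ x * qk K s x * u^s = μ x * (qk K s x * u^s) := by ring
          _ ≤ μ x * (δ^s * v x) := mul_le_mul_of_nonneg_left (key s x (hsupp x hx)) (hμ0 x)
    calc (∑ x, μ x * qk K s x) * u^s = ∑ x, μ x * qk K s x * u^s := by rw [Finset.sum_mul]
      _ ≤ ∑ x, μ x * (δ^s * v x) := Finset.sum_le_sum h1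
      _ = C * δ^s := by
          rw [hCdef, Finset.sum_mul]
          exact Finset.sum_congr rfl fun x _ => by ring
  set k : ℝ := 1 + 1/(2*M) with hkdef
  have hk1 : 1 < k := by
    rw [hkdef]
    have : 0 < 1/(2*M) := by positivity
    linarith
  have hρ1 : δ * k < 1 := by
    rw [hδdef, hkdef]
    rw [div_mul_eq_mul_div, div_lt_one hM0]
    have h2M : (0:ℝ) < 2*M := by linarith
    rw [show (M-1) * (1 + 1/(2*M)) = (M-1) + (M-1)/(2*M) by ring]
    have : (M-1)/(2*M) < 1 := by
      rw [div_lt_one h2M]; linarith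
    linarith
  have hρ0 : 0 ≤ δ * k := mul_nonneg hδ0 (by linarith)
  refine ⟨u * k, by nlinarith, ?_⟩
  refine Summable.of_nonneg_of_le
    (fun s => mul_nonneg (hann s) (pow_nonneg (by nlinarith) _))
    (fun s => ?_) (((summable_geometric_of_lt_one hρ0 hρ1).mul_left (C * (u*k))))
  calc (∑ x, μ x * qk K s x) * (u*k)^(s+1)
      = ((∑ x, μ x * qk K s x) * u^s) * (k^s * (u * k)) := by
        rw [pow_succ, mul_pow]; ring
    _ ≤ (C * δ^s) * (k^s * (u * k)) := by
        refine mul_le_mul_of_nonneg_right (hbound s) ?_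
        have : (0:ℝ) < k := by linarith
        positivity
    _ = (C * (u*k)) * (δ*k)^s := by rw [mul_pow]; ring

end Comb

/- ### The theorem -/

theorem exists_unique_fixed_point_infinite_horizon
    {χ : Type*} [Fintype χ] [Nonempty χ] [DecidableEq χ]
    (K : χ → χ → ℝ) (hK0 : ∀ x y, 0 ≤ K x y) (hK1 : ∀ x, ∑ y, K x y ≤ 1)
    (μ : χ → ℝ) (hμ0 : ∀ x, 0 ≤ μ x) (hμ1 : ∑ x, μ x = 1)
    (hkill : ∀ x : χ, Filter.Tendsto
      (fun t => surv K (fun y => if y = x then (1 : ℝ) else 0) t) Filter.atTop (nhds 0))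
    (p : ℝ) (hp : 0 < p) (hp1 : p ≤ 1) :
    ∃! z : ℝ, 1 ≤ z ∧
      Summable (fun s : ℕ => surv K μ s * ((1 - (1 - p) / z)⁻¹) ^ (s + 1)) ∧
      z = p * ∑' s : ℕ, surv K μ s * ((1 - (1 - p) / z)⁻¹) ^ (s + 1) := by
  have hsurv : surv K μ = fun s => ∑ x, μ x * qk K s x := funext (surv_eq K μ)
  have hqnn : ∀ s (x : χ), 0 ≤ qk K s x := qk_nonneg hK0 hK1
  have hnn : ∀ s, 0 ≤ ∑ x, μ x * qk K s x :=
    fun s => Finset.sum_nonneg fun x _ => mul_nonneg (hμ0 x) (hqnn s x)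
  have h0 : (∑ x, μ x * qk K 0 x) = 1 := by
    simpa [qk] using hμ1
  -- killing in terms of qk
  have hqkill : ∀ x : χ, Tendsto (fun t => qk K t x) atTop (nhds 0) := by
    intro x
    exact Tendsto.congr (fun t => surv_delta K t x) (hkill x)
  have hT : ∀ x : χ, ∃ T : ℕ, ∀ t ≥ T, qk K t x ≤ 1/2 := by
    intro x
    have hev := (hqkill x).eventually (eventually_le_nhds (by norm_num : (0:ℝ) < 1/2))
    exact eventually_atTop.mp hev
  choose T hTh using hT
  obtain ⟨t0, ht0def⟩ : ∃ t : ℕ, t = (Finset.univ.sup T) + 1 := ⟨_, rfl⟩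
  have ht0pos : 0 < t0 := by omega
  have hhalf : ∀ x, qk K t0 x ≤ 1/2 := by
    intro x
    refine hTh x t0 ?_
    have := Finset.le_sup (f := T) (Finset.mem_univ x)
    omega
  have hqdecay : ∀ s (x : χ), qk K s x ≤ (1/2:ℝ)^(s/t0) := by
    intro s x
    calc qk K s x ≤ qk K ((s/t0)*t0) x := qk_anti hK0 hK1 (Nat.div_mul_le_self s t0) x
      _ ≤ (1/2:ℝ)^(s/t0) := qk_pow hK0 hK1 (by norm_num) hhalf (s/t0) x
  have hsum1 : Summable (fun s => ∑ x, μ x * qk K s x) := by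
    refine summable_of_sum_range_le (c := t0 * (1 - 1/2:ℝ)⁻¹) hnn (fun n => ?_)
    refine le_trans (Finset.sum_le_sum (fun s _ => ?_))
      (sum_pow_div_le ht0pos (by norm_num) (by norm_num) n)
    calc ∑ x, μ x * qk K s x ≤ ∑ x, μ x * (1/2:ℝ)^(s/t0) :=
          Finset.sum_le_sum (fun x _ => mul_le_mul_of_nonneg_left (hqdecay s x) (hμ0 x))
      _ = (1/2:ℝ)^(s/t0) := by rw [← Finset.sum_mul, hμ1, one_mul]
  have hopen : ∀ u, 1 ≤ u → Summable (fun s => (∑ x, μ x * qk K s x) * u^(s+1)) →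
      ∃ u', u < u' ∧ Summable (fun s => (∑ x, μ x * qk K s x) * u'^(s+1)) :=
    fun u hu hs => right_open hK0 hK1 hμ0 u hu hs
  have habs := abstract_main (fun s => ∑ x, μ x * qk K s x) h0 hnn hsum1 hopen p hp hp1
  rw [hsurv]
  simpa only [rF, psiF] using habs
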